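/- Trace-norm bound for the mediating server's states: let ρ⁰ = ((1−Q)/p)·P(|f₀⟩+|f₁⟩) + (Q/p)·P(|f₂⟩+|f₃⟩) and ρ¹ = ((1−Q)/p)·P(|f₀⟩−|f₁⟩) + (Q/p)·P(|f₂⟩−|f₃⟩), where P(z) = zz*, 0 ≤ Q ≤ 1, p = 2p_a > 0, and Re⟨f₀|f₁⟩ = Re⟨f₂|f₃⟩ = 0. Then (1/2)‖ρ⁰ − ρ¹‖₁ ≤ ((1−Q)/p_a)·√(⟨f₀|f₀⟩⟨f₁|f₁⟩) + (Q/p_a)·√(⟨f₂|f₂⟩⟨f₃|f₃⟩). -/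

import Mathlib

open Matrix
open scoped ComplexOrder

/-- The trace norm of a square complex matrix: the sum of its singular values.
For a Hermitian matrix this equals the sum of the absolute values of its eigenvalues. -/
noncomputable def traceNorm {n : Type*} [Fintype n] [DecidableEq n]
    (A : Matrix n n ℂ) : ℝ :=
  ∑ i, Real.sqrt ((Matrix.posSemidef_conjTranspose_mul_self A).isHermitian.eigenvalues i)

variable {n : Type*} [Fintype n] [DecidableEq n]

set_option linter.unusedSectionVars false

lemma trace_conj_diag (U : Matrix.unitaryGroup n ℂ) (d : n → ℂ) :
    trace ((U : Matrix n n ℂ) * diagonal d * star (U : Matrix n n ℂ)) = ∑ i, d i := by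
  rw [trace_mul_cycle, Unitary.coe_star_mul_self, one_mul, trace_diagonal]

lemma psd_vecMulVec (u : n → ℂ) : PosSemidef (vecMulVec u (star u)) := by
  refine PosSemidef.of_dotProduct_mulVec_nonneg ?_ ?_
  · ext i j
    simp [vecMulVec, conjTranspose_apply, mul_comm]
  · intro x
    have h : star x ⬝ᵥ (vecMulVec u (star u)) *ᵥ x = star (star u ⬝ᵥ x) * (star u ⬝ᵥ x) := by
      simp only [dotProduct, mulVec, vecMulVec, Pi.star_apply, of_apply, star_sum, star_mul',
        star_star, Finset.mul_sum, Finset.sum_mul]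
      rw [Finset.sum_comm]
      congr 1; ext i; congr 1; ext j; ring
    rw [h]
    exact star_mul_self_nonneg _

open scoped MatrixOrder Matrix.Norms.L2Operator in
lemma traceNorm_eq_sum_abs_eigenvalues {H : Matrix n n ℂ} (hH : H.IsHermitian) :
    traceNorm H = ∑ i, |hH.eigenvalues i| := by
  have hB := posSemidef_conjTranspose_mul_self H
  set U : Matrix n n ℂ := (Matrix.IsHermitian.eigenvectorUnitary hH : Matrix n n ℂ) with hU
  set M : Matrix n n ℂ :=
    U * diagonal ((↑) ∘ fun i => |hH.eigenvalues i|) * star U with hM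
  have hdiag_psd : PosSemidef (diagonal ((↑) ∘ fun i => |hH.eigenvalues i| : n → ℂ)) := by
    refine PosSemidef.diagonal fun i => ?_
    simp only [Pi.zero_apply, Function.comp_apply]
    exact Complex.zero_le_real.2 (abs_nonneg _)
  have hM_psd : M.PosSemidef := by
    rw [hM, Matrix.star_eq_conjTranspose]
    exact hdiag_psd.mul_mul_conjTranspose_same U
  have h1 : star U * U = 1 := Unitary.coe_star_mul_self _
  have hM_sq : M ^ 2 = Hᴴ * H := by
    rw [hH.eq, pow_two, hM]
    calc U * diagonal ((↑) ∘ fun i => |hH.eigenvalues i|) * star U *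
          (U * diagonal ((↑) ∘ fun i => |hH.eigenvalues i|) * star U)
        = U * (diagonal ((↑) ∘ fun i => |hH.eigenvalues i|) * (star U * U) *
            diagonal ((↑) ∘ fun i => |hH.eigenvalues i|)) * star U := by
          simp only [mul_assoc]
      _ = U * (diagonal (RCLike.ofReal ∘ hH.eigenvalues) * (star U * U) *
            diagonal (RCLike.ofReal ∘ hH.eigenvalues)) * star U := by
          rw [h1, mul_one, mul_one, diagonal_mul_diagonal, diagonal_mul_diagonal]
          have habs : (fun i => ((Complex.ofReal ∘ fun i => |hH.eigenvalues i|) i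
              * (Complex.ofReal ∘ fun i => |hH.eigenvalues i|) i))
              = fun i => ((RCLike.ofReal ∘ hH.eigenvalues) i * (RCLike.ofReal ∘ hH.eigenvalues) i) := by
            ext i
            simp only [Function.comp_apply]
            norm_cast
            rw [abs_mul_abs_self]
            rfl
          rw [habs]
      _ = H * H := by
          conv_rhs => rw [hH.spectral_theorem]
          simp only [Unitary.conjStarAlgAut_apply, Unitary.coe_star, mul_assoc]
          rfl
  have hMsqrt : M = CFC.sqrt (Hᴴ * H) :=
    (CFC.sqrt_unique (by rw [← pow_two]; exact hM_sq) hM_psd.nonneg).symm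
  have hsqrt_def : CFC.sqrt (Hᴴ * H) = (Matrix.IsHermitian.eigenvectorUnitary hB.1 : Matrix n n ℂ)
      * diagonal ((↑) ∘ Real.sqrt ∘ hB.1.eigenvalues)
      * star (Matrix.IsHermitian.eigenvectorUnitary hB.1 : Matrix n n ℂ) := by
    rw [CFC.sqrt_eq_cfc, cfc_nnreal_eq_real _ _ hB.nonneg, hB.1.cfc_eq]
    simp only [IsHermitian.cfc, Unitary.conjStarAlgAut_apply, Unitary.coe_star]
    congr 3
    ext i
    simp [Real.coe_sqrt, Real.coe_toNNReal', max_eq_left (hB.eigenvalues_nonneg i)]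
  have h2 : (trace (CFC.sqrt (Hᴴ * H))).re = traceNorm H := by
    rw [hsqrt_def, trace_conj_diag]
    rw [traceNorm]
    rw [Complex.re_sum]
    simp
  have h3 : (trace M).re = ∑ i, |hH.eigenvalues i| := by
    rw [hM, trace_conj_diag, Complex.re_sum]
    simp
  rw [← h2, ← hMsqrt, h3]

lemma traceNorm_le_of_psd_decomp {H P N : Matrix n n ℂ} (hP : P.PosSemidef) (hN : N.PosSemidef)
    (hHPN : H = P - N) : traceNorm H ≤ (trace P).re + (trace N).re := by
  have hHerm : H.IsHermitian := hHPN ▸ hP.1.sub hN.1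
  rw [traceNorm_eq_sum_abs_eigenvalues hHerm]
  set U : Matrix n n ℂ := (Matrix.IsHermitian.eigenvectorUnitary hHerm : Matrix n n ℂ) with hU
  have key : ∀ (A : Matrix n n ℂ) (i : n), (star U * A * U) i i
      = star (⇑(hHerm.eigenvectorBasis i)) ⬝ᵥ (A *ᵥ ⇑(hHerm.eigenvectorBasis i)) := by
    intro A i
    simp only [mul_apply, mulVec, dotProduct, Matrix.star_apply, Pi.star_apply, hU,
      IsHermitian.eigenvectorUnitary_apply, Finset.sum_mul, Finset.mul_sum]
    rw [Finset.sum_comm]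
    exact Finset.sum_congr rfl fun j _ => Finset.sum_congr rfl fun k _ => by ring
  have htr : ∀ (A : Matrix n n ℂ), trace (star U * A * U) = trace A := by
    intro A
    have h1 : U * star U = 1 := by
      rw [hU, ← Unitary.coe_star]; rw [show ((hHerm.eigenvectorUnitary : Matrix n n ℂ) * ((star hHerm.eigenvectorUnitary : unitary (Matrix n n ℂ)) : Matrix n n ℂ)) = ((hHerm.eigenvectorUnitary * star hHerm.eigenvectorUnitary : unitary (Matrix n n ℂ)) : Matrix n n ℂ) from rfl, Unitary.mul_star_self]; rfl
    rw [trace_mul_cycle, h1, one_mul]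
  have hsum : ∀ (A : Matrix n n ℂ),
      ∑ i, (star (⇑(hHerm.eigenvectorBasis i)) ⬝ᵥ (A *ᵥ ⇑(hHerm.eigenvectorBasis i))).re
        = (trace A).re := by
    intro A
    rw [← htr A, trace, Complex.re_sum]
    exact Finset.sum_congr rfl fun i _ => by rw [diag_apply, key A i]
  rw [← hsum P, ← hsum N, ← Finset.sum_add_distrib]
  refine Finset.sum_le_sum fun i _ => ?_
  have hP' : 0 ≤ (star (⇑(hHerm.eigenvectorBasis i)) ⬝ᵥ (P *ᵥ ⇑(hHerm.eigenvectorBasis i))).re :=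
    hP.re_dotProduct_nonneg _
  have hN' : 0 ≤ (star (⇑(hHerm.eigenvectorBasis i)) ⬝ᵥ (N *ᵥ ⇑(hHerm.eigenvectorBasis i))).re :=
    hN.re_dotProduct_nonneg _
  have hev : hHerm.eigenvalues i
      = (star (⇑(hHerm.eigenvectorBasis i)) ⬝ᵥ (P *ᵥ ⇑(hHerm.eigenvectorBasis i))).re
      - (star (⇑(hHerm.eigenvectorBasis i)) ⬝ᵥ (N *ᵥ ⇑(hHerm.eigenvectorBasis i))).re := by
    rw [hHerm.eigenvalues_eq i]
    simp only [hHPN, sub_mulVec, dotProduct_sub, RCLike.re_to_complex, Complex.sub_re]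
  rw [hev]
  exact (abs_sub _ _).trans (by rw [abs_of_nonneg hP', abs_of_nonneg hN'])

lemma psd_real_smul {A : Matrix n n ℂ} (hA : A.PosSemidef) {r : ℝ} (hr : 0 ≤ r) :
    (r • A).PosSemidef := by
  refine PosSemidef.of_dotProduct_mulVec_nonneg ?_ ?_
  · unfold Matrix.IsHermitian
    rw [conjTranspose_smul_non_comm r A (fun _ _ => by simp [mul_comm])]
    simp [hA.1.eq]
  · intro x
    rw [smul_mulVec, dotProduct_smul]
    have h0 : (0:ℂ) ≤ (r:ℂ) := Complex.zero_le_real.2 hr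
    have := mul_nonneg h0 (hA.dotProduct_mulVec_nonneg x)
    rwa [← Complex.real_smul] at this

lemma re_trace_vecMulVec (u : n → ℂ) :
    (trace (vecMulVec u (star u))).re = (star u ⬝ᵥ u).re := by
  simp only [trace, diag_apply, vecMulVec, of_apply, dotProduct, Pi.star_apply, Complex.re_sum]
  exact Finset.sum_congr rfl fun i _ => by rw [mul_comm]

lemma dotProduct_star_self_re_nonneg (u : n → ℂ) : 0 ≤ (star u ⬝ᵥ u).re := by
  rw [dotProduct, Complex.re_sum]
  refine Finset.sum_nonneg fun i _ => ?_
  simp only [Pi.star_apply, RCLike.star_def, Complex.mul_re, Complex.conj_re, Complex.conj_im]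
  nlinarith [sq_nonneg (u i).re, sq_nonneg (u i).im]

lemma dotProduct_star_self_re_eq_zero {u : n → ℂ} (h : (star u ⬝ᵥ u).re = 0) : u = 0 := by
  ext i
  rw [dotProduct, Complex.re_sum] at h
  have hterm : ∀ j ∈ Finset.univ, (0:ℝ) ≤ ((star u) j * u j).re := fun j _ => by
    simp only [Pi.star_apply, RCLike.star_def, Complex.mul_re, Complex.conj_re, Complex.conj_im]
    nlinarith [sq_nonneg (u j).re, sq_nonneg (u j).im]
  have := (Finset.sum_eq_zero_iff_of_nonneg hterm).mp h i (Finset.mem_univ i)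
  simp only [Pi.star_apply, RCLike.star_def, Complex.mul_re, Complex.conj_re, Complex.conj_im] at this
  have h1 : (u i).re = 0 ∧ (u i).im = 0 := by constructor <;> nlinarith [sq_nonneg (u i).re, sq_nonneg (u i).im]
  exact Complex.ext h1.1 h1.2

lemma pair_decomp (a b : n → ℂ) :
    ∃ P N : Matrix n n ℂ, P.PosSemidef ∧ N.PosSemidef ∧
      vecMulVec a (star b) + vecMulVec b (star a) = P - N ∧
      (trace P).re + (trace N).re
        = 2 * Real.sqrt ((star a ⬝ᵥ a).re * (star b ⬝ᵥ b).re) := by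
  rcases eq_or_ne a 0 with rfl | ha
  · refine ⟨0, 0, PosSemidef.zero, PosSemidef.zero, by ext i j; simp [vecMulVec], by simp⟩
  rcases eq_or_ne b 0 with rfl | hb
  · refine ⟨0, 0, PosSemidef.zero, PosSemidef.zero, by ext i j; simp [vecMulVec], by simp⟩
  set α := (star a ⬝ᵥ a).re with hα
  set β := (star b ⬝ᵥ b).re with hβ
  have hα0 : 0 < α := lt_of_le_of_ne (dotProduct_star_self_re_nonneg a)
    (fun h => ha (dotProduct_star_self_re_eq_zero h.symm))
  have hβ0 : 0 < β := lt_of_le_of_ne (dotProduct_star_self_re_nonneg b)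
    (fun h => hb (dotProduct_star_self_re_eq_zero h.symm))
  set s := Real.sqrt α with hs
  set t := Real.sqrt β with ht
  have hs0 : 0 < s := Real.sqrt_pos.2 hα0
  have ht0 : 0 < t := Real.sqrt_pos.2 hβ0
  set c := Real.sqrt (t / s) with hc
  set d := Real.sqrt (s / t) with hd
  have hc0 : 0 < c := Real.sqrt_pos.2 (div_pos ht0 hs0)
  have hd0 : 0 < d := Real.sqrt_pos.2 (div_pos hs0 ht0)
  have hcd : c * d = 1 := by
    rw [hc, hd, ← Real.sqrt_mul (div_pos ht0 hs0).le]
    rw [div_mul_div_comm, mul_comm, div_self (by positivity), Real.sqrt_one]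
  have hc2 : c ^ 2 = t / s := Real.sq_sqrt (div_pos ht0 hs0).le
  have hd2 : d ^ 2 = s / t := Real.sq_sqrt (div_pos hs0 ht0).le
  set u : n → ℂ := c • a + d • b with hu
  set v : n → ℂ := c • a - d • b with hv
  refine ⟨(1/2 : ℝ) • vecMulVec u (star u), (1/2 : ℝ) • vecMulVec v (star v),
    psd_real_smul (psd_vecMulVec u) (by norm_num),
    psd_real_smul (psd_vecMulVec v) (by norm_num), ?_, ?_⟩
  · ext i j
    have hcdC : (c : ℂ) * (d : ℂ) = 1 := by exact_mod_cast hcd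
    simp only [Matrix.add_apply, Matrix.sub_apply, Matrix.smul_apply, vecMulVec, of_apply, Pi.star_apply, hu, hv,
      Pi.add_apply, Pi.sub_apply, Pi.smul_apply, Complex.real_smul, star_mul', star_add,
      star_sub, Complex.star_def, Complex.conj_ofReal, smul_eq_mul]
    push_cast
    linear_combination (-(a i * (starRingEnd ℂ) (b j)) - b i * (starRingEnd ℂ) (a j)) * hcdC
  · have hkey : ∀ i : n, star u i * u i + star v i * v i
        = ((c^2 : ℝ) : ℂ) * (star a i * a i) + ((d^2 : ℝ) : ℂ) * (star b i * b i)
          + ((c^2 : ℝ) : ℂ) * (star a i * a i) + ((d^2 : ℝ) : ℂ) * (star b i * b i) := by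
      intro i
      simp only [hu, hv, Pi.add_apply, Pi.sub_apply, Pi.smul_apply, Pi.star_apply,
        Complex.real_smul, star_add, star_sub, star_mul', Complex.star_def, Complex.conj_ofReal]
      push_cast
      ring
    have hsum : (star u ⬝ᵥ u).re + (star v ⬝ᵥ v).re = 2 * (c^2 * α + d^2 * β) := by
      have : (star u ⬝ᵥ u) + (star v ⬝ᵥ v)
          = ((c^2 : ℝ) : ℂ) * (star a ⬝ᵥ a) + ((d^2 : ℝ) : ℂ) * (star b ⬝ᵥ b)
          + ((c^2 : ℝ) : ℂ) * (star a ⬝ᵥ a) + ((d^2 : ℝ) : ℂ) * (star b ⬝ᵥ b) := by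
        simp only [dotProduct, Finset.mul_sum, ← Finset.sum_add_distrib]
        exact Finset.sum_congr rfl fun i _ => hkey i
      have hre := congrArg Complex.re this
      simp only [Complex.add_re, Complex.re_ofReal_mul] at hre
      rw [hre]; ring
    rw [trace_smul, trace_smul, Complex.real_smul, Complex.real_smul,
      Complex.re_ofReal_mul, Complex.re_ofReal_mul, re_trace_vecMulVec, re_trace_vecMulVec]
    rw [← mul_add, hsum]
    have hαβ : Real.sqrt (α * β) = s * t := by
      rw [hs, ht, Real.sqrt_mul hα0.le]
    rw [hαβ, hc2, hd2]
    have : α = s ^ 2 := (Real.sq_sqrt hα0.le).symm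
    have hβs : β = t ^ 2 := (Real.sq_sqrt hβ0.le).symm
    rw [this, hβs]
    field_simp
    ring

/-- Trace-norm bound for the mediating server's states:
(1/2)‖ρ⁰ − ρ¹‖₁ ≤ ((1−Q)/p_a)√(⟨f₀|f₀⟩⟨f₁|f₁⟩) + (Q/p_a)√(⟨f₂|f₂⟩⟨f₃|f₃⟩). -/
theorem stmt8 {m : ℕ} (f₀ f₁ f₂ f₃ : Fin m → ℂ) (Q : ℝ)
    (hQ0 : 0 ≤ Q) (hQ1 : Q ≤ 1)
    (pa : ℝ)
    (hpa : pa = (1 / 2) * (1 - Q) * ((star f₀ ⬝ᵥ f₀).re + (star f₁ ⬝ᵥ f₁).re)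
        + (1 / 2) * Q * ((star f₂ ⬝ᵥ f₂).re + (star f₃ ⬝ᵥ f₃).re))
    (hpa_pos : 0 < pa)
    (p : ℝ) (hp : p = 2 * pa)
    (hRe01 : (star f₀ ⬝ᵥ f₁).re = 0) (hRe23 : (star f₂ ⬝ᵥ f₃).re = 0)
    (ρ0 ρ1 : Matrix (Fin m) (Fin m) ℂ)
    (hρ0 : ρ0 = ((1 - Q) / p) • vecMulVec (f₀ + f₁) (star (f₀ + f₁))
        + (Q / p) • vecMulVec (f₂ + f₃) (star (f₂ + f₃)))
    (hρ1 : ρ1 = ((1 - Q) / p) • vecMulVec (f₀ - f₁) (star (f₀ - f₁))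
        + (Q / p) • vecMulVec (f₂ - f₃) (star (f₂ - f₃))) :
    (1 / 2) * traceNorm (ρ0 - ρ1)
      ≤ ((1 - Q) / pa) * Real.sqrt ((star f₀ ⬝ᵥ f₀).re * (star f₁ ⬝ᵥ f₁).re)
      + (Q / pa) * Real.sqrt ((star f₂ ⬝ᵥ f₂).re * (star f₃ ⬝ᵥ f₃).re) := by

  obtain ⟨P₁, N₁, hP₁, hN₁, hE₁, hT₁⟩ := pair_decomp f₀ f₁
  obtain ⟨P₂, N₂, hP₂, hN₂, hE₂, hT₂⟩ := pair_decomp f₂ f₃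
  have hppos : 0 < p := by rw [hp]; linarith
  have hr₁ : 0 ≤ 2 * (1 - Q) / p := by
    apply div_nonneg _ hppos.le
    linarith
  have hr₂ : 0 ≤ 2 * Q / p := by positivity
  set S₁ := Real.sqrt ((star f₀ ⬝ᵥ f₀).re * (star f₁ ⬝ᵥ f₁).re) with hS₁
  set S₂ := Real.sqrt ((star f₂ ⬝ᵥ f₂).re * (star f₃ ⬝ᵥ f₃).re) with hS₂
  have hdiff : ρ0 - ρ1 = ((2 * (1 - Q) / p) • P₁ + (2 * Q / p) • P₂)
      - ((2 * (1 - Q) / p) • N₁ + (2 * Q / p) • N₂) := by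
    have h1 : ρ0 - ρ1 = (2 * (1 - Q) / p) • (vecMulVec f₀ (star f₁) + vecMulVec f₁ (star f₀))
        + (2 * Q / p) • (vecMulVec f₂ (star f₃) + vecMulVec f₃ (star f₂)) := by
      rw [hρ0, hρ1]
      ext i j
      simp only [Matrix.add_apply, Matrix.sub_apply, Matrix.smul_apply, vecMulVec, of_apply,
        Pi.star_apply, Pi.add_apply, Pi.sub_apply, star_add, star_sub, Complex.real_smul,
        smul_eq_mul]
      push_cast
      ring
    rw [h1, hE₁, hE₂, smul_sub, smul_sub]
    abel
  have hb := traceNorm_le_of_psd_decomp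
    ((psd_real_smul hP₁ hr₁).add (psd_real_smul hP₂ hr₂))
    ((psd_real_smul hN₁ hr₁).add (psd_real_smul hN₂ hr₂)) hdiff
  have htr : ∀ (A B : Matrix (Fin m) (Fin m) ℂ),
      (trace ((2 * (1 - Q) / p) • A + (2 * Q / p) • B)).re
        = (2 * (1 - Q) / p) * (trace A).re + (2 * Q / p) * (trace B).re := by
    intro A B
    rw [trace_add, trace_smul, trace_smul, Complex.add_re, Complex.real_smul,
      Complex.real_smul, Complex.re_ofReal_mul, Complex.re_ofReal_mul]
  rw [htr, htr] at hb
  have hfinal : (2 * (1 - Q) / p) * ((trace P₁).re + (trace N₁).re)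
      + (2 * Q / p) * ((trace P₂).re + (trace N₂).re)
      = 2 * (((1 - Q) / pa) * S₁ + (Q / pa) * S₂) := by
    rw [hT₁, hT₂, hp]
    field_simp
  nlinarith [hb, hfinal]
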